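/- arXiv:2308.12581 — 3 statements merged into one kernel-verified Lean document; each statement's English description precedes it below -/
import Mathlib

section
/- If all m vectors G_1, ..., G_m lie within distance r_0 of a point p, and the Huber threshold satisfies T > 2r_0, then the minimizer of s ↦ Σ_{i=1}^m φ_T(‖s - G_i‖) equals the arithmetic mean (1/m)Σ_i G_i. -/
noncomputable def huber (T u : ℝ) : ℝ := if |u| ≤ T then u ^ 2 / 2 else T * |u| - T ^ 2 / 2

/-- If all points `G i` lie within `r₀` of a common point `p` and `T > 2 r₀`, the minimizer of
the summed Huber loss is the arithmetic mean. -/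
theorem stmt_2 (d m : ℕ) (hm : 0 < m) (T r0 : ℝ) (hr0 : 0 < r0) (hT : 2 * r0 < T)
    (G : Fin m → EuclideanSpace ℝ (Fin d)) (p : EuclideanSpace ℝ (Fin d))
    (hG : ∀ i, ‖G i - p‖ ≤ r0)
    (a : EuclideanSpace ℝ (Fin d))
    (ha : IsMinOn (fun s => ∑ i, huber T ‖s - G i‖) Set.univ a) :
    a = (m : ℝ)⁻¹ • ∑ i, G i := by
  have hmpos : (0:ℝ) < m := Nat.cast_pos.mpr hm
  set μ : EuclideanSpace ℝ (Fin d) := (m : ℝ)⁻¹ • ∑ i, G i with hμdef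
  have hsmul : (m : ℝ) • μ = ∑ i, G i := by
    rw [hμdef, smul_smul, mul_inv_cancel₀ (ne_of_gt hmpos), one_smul]
  have hμp : ‖μ - p‖ ≤ r0 := by
    have h1 : μ - p = (m:ℝ)⁻¹ • ∑ i, (G i - p) := by
      rw [Finset.sum_sub_distrib, smul_sub, ← hμdef, Finset.sum_const, Finset.card_univ,
        Fintype.card_fin, ← Nat.cast_smul_eq_nsmul ℝ, smul_smul,
        inv_mul_cancel₀ (ne_of_gt hmpos), one_smul]
    rw [h1, norm_smul]
    have h2 : ‖∑ i, (G i - p)‖ ≤ (m:ℝ) * r0 := by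
      calc ‖∑ i, (G i - p)‖ ≤ ∑ i : Fin m, ‖G i - p‖ := norm_sum_le _ _
        _ ≤ ∑ _i : Fin m, r0 := Finset.sum_le_sum fun i _ => hG i
        _ = (m:ℝ) * r0 := by
            rw [Finset.sum_const, Finset.card_univ, Fintype.card_fin, nsmul_eq_mul]
    have h3 : ‖(m:ℝ)⁻¹‖ = (m:ℝ)⁻¹ := by
      rw [Real.norm_eq_abs, abs_of_pos (by positivity)]
    rw [h3]
    calc (m:ℝ)⁻¹ * ‖∑ i, (G i - p)‖ ≤ (m:ℝ)⁻¹ * ((m:ℝ) * r0) := by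
          exact mul_le_mul_of_nonneg_left h2 (by positivity)
      _ = r0 := by field_simp
  have hμG : ∀ i, ‖μ - G i‖ ≤ 2 * r0 := by
    intro i
    have h1 : μ - G i = (μ - p) + (p - G i) := by abel
    calc ‖μ - G i‖ ≤ ‖μ - p‖ + ‖p - G i‖ := by rw [h1]; exact norm_add_le _ _
      _ ≤ r0 + r0 := add_le_add hμp (by rw [norm_sub_rev]; exact hG i)
      _ = 2 * r0 := by ring
  have hsum0 : ∑ i, (μ - G i) = 0 := by
    rw [Finset.sum_sub_distrib, Finset.sum_const, Finset.card_univ, Fintype.card_fin,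
      ← Nat.cast_smul_eq_nsmul ℝ, hsmul, sub_self]
  set c := ‖a - μ‖ with hc
  have hexp : ∀ i, ‖a - G i‖^2 = c^2 + 2 * (inner ℝ (a - μ) (μ - G i) : ℝ) + ‖μ - G i‖^2 := by
    intro i
    have h1 : a - G i = (a - μ) + (μ - G i) := by abel
    rw [h1, norm_add_sq_real]
  have hg : ∑ i, ‖a - G i‖^2 = (m:ℝ) * c^2 + ∑ i, ‖μ - G i‖^2 := by
    have hz : ∑ i, (2 * (inner ℝ (a - μ) (μ - G i) : ℝ)) = 0 := by
      rw [← Finset.mul_sum, ← inner_sum, hsum0, inner_zero_right, mul_zero]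
    calc ∑ i, ‖a - G i‖^2
        = ∑ i, (c^2 + 2 * (inner ℝ (a - μ) (μ - G i) : ℝ) + ‖μ - G i‖^2) :=
          Finset.sum_congr rfl fun i _ => hexp i
      _ = (∑ _i : Fin m, c^2) + (∑ i, 2 * (inner ℝ (a - μ) (μ - G i) : ℝ))
            + ∑ i, ‖μ - G i‖^2 := by rw [Finset.sum_add_distrib, Finset.sum_add_distrib]
      _ = (m:ℝ) * c^2 + ∑ i, ‖μ - G i‖^2 := by
          rw [hz, add_zero, Finset.sum_const, Finset.card_univ, Fintype.card_fin, nsmul_eq_mul]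
  have hFμ : ∑ i, huber T ‖μ - G i‖ = (∑ i, ‖μ - G i‖^2) / 2 := by
    rw [Finset.sum_div]
    refine Finset.sum_congr rfl fun i _ => ?_
    unfold huber
    rw [if_pos]
    rw [abs_of_nonneg (norm_nonneg _)]
    linarith [hμG i]
  have hmin : ∑ i, huber T ‖a - G i‖ ≤ ∑ i, huber T ‖μ - G i‖ :=
    isMinOn_iff.mp ha μ (Set.mem_univ μ)
  set M : ℝ := max 0 (c - (T - 2 * r0)) with hM
  have hM0 : 0 ≤ M := le_max_left _ _
  have hD : ∀ i, ‖a - G i‖^2 / 2 - huber T ‖a - G i‖ ≤ M^2 / 2 := by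
    intro i
    unfold huber
    by_cases h : |‖a - G i‖| ≤ T
    · rw [if_pos h]; simp; positivity
    · rw [if_neg h]
      push_neg at h
      rw [abs_of_nonneg (norm_nonneg _)] at h ⊢
      have h1 : a - G i = (a - μ) + (μ - G i) := by abel
      have hu : ‖a - G i‖ ≤ c + 2 * r0 := by
        calc ‖a - G i‖ ≤ ‖a - μ‖ + ‖μ - G i‖ := by rw [h1]; exact norm_add_le _ _
          _ ≤ c + 2 * r0 := add_le_add le_rfl (hμG i)
      have hMle : ‖a - G i‖ - T ≤ M := by
        have : ‖a - G i‖ - T ≤ c - (T - 2 * r0) := by linarith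
        exact this.trans (le_max_right _ _)
      nlinarith [h, hMle, hM0]
  have hsumD : ∑ i, (‖a - G i‖^2 / 2 - huber T ‖a - G i‖) ≤ (m:ℝ) * (M^2 / 2) := by
    calc ∑ i, (‖a - G i‖^2 / 2 - huber T ‖a - G i‖) ≤ ∑ _i : Fin m, M^2 / 2 :=
        Finset.sum_le_sum fun i _ => hD i
      _ = (m:ℝ) * (M^2 / 2) := by
        rw [Finset.sum_const, Finset.card_univ, Fintype.card_fin, nsmul_eq_mul]
  rw [Finset.sum_sub_distrib, ← Finset.sum_div] at hsumD
  have hkey : (m:ℝ) * c^2 ≤ (m:ℝ) * M^2 := by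
    nlinarith [hsumD, hg, hFμ, hmin]
  have hc0 : c = 0 := by
    by_contra hne
    have hcpos : 0 < c := lt_of_le_of_ne (norm_nonneg _) (Ne.symm hne)
    have hMlt : M < c := max_lt hcpos (by linarith)
    have h2 : M ^ 2 < c ^ 2 := by nlinarith [hM0, hMlt]
    have h3 : (m:ℝ) * M ^ 2 < (m:ℝ) * c ^ 2 := mul_lt_mul_of_pos_left h2 hmpos
    linarith
  have : a - μ = 0 := norm_eq_zero.mp hc0
  rw [hμdef] at this ⊢
  exact sub_eq_zero.mp this
end

section
/- Let F : ℝ^d → ℝ be μ-strongly convex and L-smooth with minimizer w* over a convex set W containing w*. Suppose a gradient oracle g satisfies ‖g(w) - ∇F(w)‖ ≤ Δ for all w ∈ W. Then the projected gradient iteration w_{t+1} = Π_W(w_t - η g(w_t)) with step size η ≤ 1/L satisfies ‖w_t - w*‖ ≤ (1 - ημ/2)^t ‖w_0 - w*‖ + 2Δ/μ for all t ≥ 0. -/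
open Set RealInnerProductSpace

section Aux

variable {d : ℕ}

/-- Descent lemma: a function with `L`-Lipschitz gradient satisfies the quadratic upper bound. -/
lemma descent_lemma (F : EuclideanSpace ℝ (Fin d) → ℝ) (L : ℝ) (hL : 0 < L)
    (hdiff : Differentiable ℝ F)
    (hsmooth : ∀ x y, ‖gradient F x - gradient F y‖ ≤ L * ‖x - y‖)
    (x v : EuclideanSpace ℝ (Fin d)) :
    F (x + v) ≤ F x + ⟪gradient F x, v⟫ + L / 2 * ‖v‖ ^ 2 := by
  have hgradcont : Continuous (gradient F) := by
    have : LipschitzWith (Real.toNNReal L) (gradient F) := by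
      apply LipschitzWith.of_dist_le_mul
      intro a b
      simp only [dist_eq_norm]
      exact le_trans (hsmooth a b) (by gcongr; exact Real.le_coe_toNNReal L)
    exact this.continuous
  -- the path
  set γ : ℝ → EuclideanSpace ℝ (Fin d) := fun s => x + s • v with hγ
  have hderiv : ∀ s : ℝ, HasDerivAt (fun s => F (γ s)) ⟪gradient F (γ s), v⟫ s := by
    intro s
    have h1 : HasFDerivAt F ((InnerProductSpace.toDual ℝ _) (gradient F (γ s))) (γ s) :=
      ((hdiff (γ s)).hasGradientAt).hasFDerivAt
    have h2 : HasDerivAt γ v s := by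
      simpa [hγ] using ((hasDerivAt_id s).smul_const v).const_add x
    have := h1.comp_hasDerivAt s h2
    rw [InnerProductSpace.toDual_apply_apply] at this; exact this
  have hcont : Continuous fun s : ℝ => ⟪gradient F (γ s), v⟫ := by
    exact (hgradcont.comp (continuous_const.add (continuous_id.smul continuous_const) : Continuous γ)).inner continuous_const
  have hint : ∀ a b : ℝ, IntervalIntegrable (fun s : ℝ => ⟪gradient F (γ s), v⟫)
      MeasureTheory.volume a b := fun a b => hcont.intervalIntegrable a b
  have hftc : F (x + v) - F x = ∫ s in (0:ℝ)..1, ⟪gradient F (γ s), v⟫ := by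
    have := intervalIntegral.integral_eq_sub_of_hasDerivAt
      (fun s _ => hderiv s) (hint 0 1)
    simp only [hγ] at this ⊢
    rw [this]; simp
  have hbound : ∀ s ∈ Set.Icc (0:ℝ) 1,
      ⟪gradient F (γ s), v⟫ ≤ ⟪gradient F x, v⟫ + L * s * ‖v‖ ^ 2 := by
    intro s hs
    have h1 : ⟪gradient F (γ s) - gradient F x, v⟫ ≤ ‖gradient F (γ s) - gradient F x‖ * ‖v‖ :=
      real_inner_le_norm _ _
    have h2 : ‖gradient F (γ s) - gradient F x‖ ≤ L * (s * ‖v‖) := by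
      have := hsmooth (γ s) x
      simpa [hγ, norm_smul, abs_of_nonneg hs.1] using this
    have h3 : ⟪gradient F (γ s) - gradient F x, v⟫ ≤ L * s * ‖v‖ ^ 2 := by
      calc ⟪gradient F (γ s) - gradient F x, v⟫ ≤ ‖gradient F (γ s) - gradient F x‖ * ‖v‖ := h1
        _ ≤ L * (s * ‖v‖) * ‖v‖ := by
            apply mul_le_mul_of_nonneg_right h2 (norm_nonneg _)
        _ = L * s * ‖v‖ ^ 2 := by ring
    have : ⟪gradient F (γ s), v⟫ = ⟪gradient F x, v⟫ + ⟪gradient F (γ s) - gradient F x, v⟫ := by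
      rw [inner_sub_left]; ring
    linarith
  have hintle : (∫ s in (0:ℝ)..1, ⟪gradient F (γ s), v⟫)
      ≤ ∫ s in (0:ℝ)..1, (⟪gradient F x, v⟫ + L * s * ‖v‖ ^ 2) := by
    apply intervalIntegral.integral_mono_on (by norm_num) (hint 0 1)
    · apply IntervalIntegrable.add intervalIntegrable_const
      exact (((continuous_const.mul continuous_id).mul continuous_const)).intervalIntegrable _ _
    · exact hbound
  have hval : (∫ s in (0:ℝ)..1, (⟪gradient F x, v⟫ + L * s * ‖v‖ ^ 2))
      = ⟪gradient F x, v⟫ + L / 2 * ‖v‖ ^ 2 := by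
    rw [intervalIntegral.integral_add intervalIntegrable_const
      (by exact (((continuous_const.mul continuous_id).mul continuous_const)).intervalIntegrable _ _)]
    simp only [intervalIntegral.integral_const, smul_eq_mul, sub_zero, one_mul]
    have : (∫ s in (0:ℝ)..1, L * s * ‖v‖ ^ 2) = L * ‖v‖^2 * ∫ s in (0:ℝ)..1, s := by
      rw [← intervalIntegral.integral_const_mul]
      congr 1; ext s; ring
    rw [this, integral_id]; ring
  linarith [hftc ▸ le_trans hintle (le_of_eq hval)]

end Aux

section Aux2

variable {d : ℕ}

/-- Nonexpansiveness of the projection toward a point of the set. -/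
lemma proj_nonexpansive (W : Set (EuclideanSpace ℝ (Fin d))) (hW : Convex ℝ W)
    (proj : EuclideanSpace ℝ (Fin d) → EuclideanSpace ℝ (Fin d))
    (hproj : ∀ y, proj y ∈ W ∧ ∀ z ∈ W, ‖y - proj y‖ ≤ ‖y - z‖)
    (wstar : EuclideanSpace ℝ (Fin d)) (hws : wstar ∈ W) (y : EuclideanSpace ℝ (Fin d)) :
    ‖proj y - wstar‖ ≤ ‖y - wstar‖ := by
  set p := proj y with hp
  have hpW : p ∈ W := (hproj y).1
  haveI : Nonempty W := ⟨⟨wstar, hws⟩⟩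
  have hinf : ‖y - p‖ = ⨅ w : W, ‖y - w‖ := by
    apply le_antisymm
    · exact le_ciInf fun z => (hproj y).2 z z.2
    · exact ciInf_le ⟨0, fun _ ⟨_, h⟩ => h ▸ norm_nonneg _⟩ (⟨p, hpW⟩ : W)
  have hobtuse : ⟪y - p, wstar - p⟫ ≤ 0 :=
    ((norm_eq_iInf_iff_real_inner_le_zero hW hpW).1 hinf) wstar hws
  have key : ‖p - wstar‖ ^ 2 ≤ ‖y - wstar‖ * ‖p - wstar‖ := by
    have h1 : ⟪p - wstar, p - wstar⟫ = ⟪p - y, p - wstar⟫ + ⟪y - wstar, p - wstar⟫ := by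
      rw [← inner_add_left]; congr 1; abel
    have h2 : ⟪p - y, p - wstar⟫ ≤ 0 := by
      have : ⟪p - y, p - wstar⟫ = ⟪y - p, wstar - p⟫ := by
        rw [show p - y = -(y - p) by abel, show p - wstar = -(wstar - p) by abel,
          inner_neg_neg]
      linarith [this ▸ hobtuse]
    have h3 : ⟪y - wstar, p - wstar⟫ ≤ ‖y - wstar‖ * ‖p - wstar‖ := real_inner_le_norm _ _
    have h4 : ⟪p - wstar, p - wstar⟫ = ‖p - wstar‖ ^ 2 := real_inner_self_eq_norm_sq _
    linarith
  nlinarith [norm_nonneg (p - wstar), norm_nonneg (y - wstar)]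

end Aux2

section Aux3

variable {d : ℕ}

set_option maxHeartbeats 1000000 in
lemma contraction (F : EuclideanSpace ℝ (Fin d) → ℝ) (μ L η : ℝ)
    (hμ : 0 < μ) (hL : 0 < L) (hη : 0 < η) (hηL : η ≤ 1 / L) (hρ : 0 ≤ 1 - η * μ / 2)
    (wstar : EuclideanSpace ℝ (Fin d))
    (hdiff : Differentiable ℝ F)
    (hstrong : ∀ x y, F x + inner ℝ (gradient F x) (y - x) + μ / 2 * ‖y - x‖ ^ 2 ≤ F y)
    (hsmooth : ∀ x y, ‖gradient F x - gradient F y‖ ≤ L * ‖x - y‖)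
    (hgradstar : gradient F wstar = 0)
    (x : EuclideanSpace ℝ (Fin d)) :
    ‖x - η • gradient F x - wstar‖ ≤ (1 - η * μ / 2) * ‖x - wstar‖ := by
  set G := gradient F x with hG
  set h := x - wstar with hh
  set a : ℝ := ⟪G, h⟫ with ha
  set c : ℝ := ‖G‖ ^ 2 with hc
  set t : ℝ := 1 / L with ht
  have htpos : 0 < t := by positivity
  have hcnn : (0:ℝ) ≤ c := by positivity
  -- strong convexity lower bound on a
  have hmin : ∀ z, F wstar ≤ F z := fun z => by
    have := hstrong wstar z
    rw [hgradstar] at this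
    simp only [inner_zero_left] at this
    nlinarith [sq_nonneg ‖z - wstar‖]
  have ha1 : μ * ‖h‖ ^ 2 ≤ a := by
    have h1 := hstrong x wstar
    have h2 := hstrong wstar x
    rw [hgradstar] at h2
    simp only [inner_zero_left] at h2
    have e1 : ⟪G, wstar - x⟫ = -a := by
      rw [ha, hh, show wstar - x = -(x - wstar) by abel, inner_neg_right]
    rw [e1] at h1
    have e2 : ‖wstar - x‖ = ‖h‖ := by rw [hh, norm_sub_rev]
    rw [e2] at h1
    rw [← hh] at h2
    nlinarith
  -- co-coercivity-type bound: a ≥ t * c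
  have ha2 : t * c ≤ a := by
    have hLt2 : L * t ^ 2 = t := by rw [ht]; field_simp
    have hLt : L * t = 1 := by rw [ht]; field_simp
    -- first: F x - F wstar ≥ t*c/2, via descent at x with v = -(t•G)
    have d1 := descent_lemma F L hL hdiff hsmooth x (-(t • G))
    have e1 : ⟪G, -(t • G)⟫ = -(t * c) := by
      rw [inner_neg_right, real_inner_smul_right, real_inner_self_eq_norm_sq]
    have e2 : ‖-(t • G)‖ ^ 2 = t ^ 2 * c := by
      rw [norm_neg, norm_smul, mul_pow, hc]
      congr 1
      rw [Real.norm_eq_abs, sq_abs]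
    rw [e1, e2] at d1
    have d1' : F (x + -(t • G)) ≤ F x - t * c / 2 := by
      have : L / 2 * (t ^ 2 * c) = t * c / 2 := by
        have : L / 2 * (t ^ 2 * c) = (L * t ^ 2) * c / 2 := by ring
        rw [this, hLt2]
      rw [this] at d1; linarith
    have f1 : F wstar + t * c / 2 ≤ F x := by
      have := hmin (x + -(t • G)); linarith
    -- second: descent at wstar with v = t•G
    have d2 := descent_lemma F L hL hdiff hsmooth wstar (t • G)
    rw [hgradstar] at d2
    simp only [inner_zero_left] at d2
    have e3 : ‖t • G‖ ^ 2 = t ^ 2 * c := by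
      rw [norm_smul, mul_pow, hc]
      congr 1
      rw [Real.norm_eq_abs, sq_abs]
    rw [e3] at d2
    have d2' : F (wstar + t • G) ≤ F wstar + t * c / 2 := by
      have : L / 2 * (t ^ 2 * c) = t * c / 2 := by
        have : L / 2 * (t ^ 2 * c) = (L * t ^ 2) * c / 2 := by ring
        rw [this, hLt2]
      rw [this] at d2; linarith
    -- strong convexity from x to wstar + t•G
    have f2 := hstrong x (wstar + t • G)
    have e4 : ⟪G, wstar + t • G - x⟫ = t * c - a := by
      have : wstar + t • G - x = t • G - h := by rw [hh]; abel
      rw [this, inner_sub_right, real_inner_smul_right, real_inner_self_eq_norm_sq, ← hc, ← ha]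
    rw [e4] at f2
    nlinarith [sq_nonneg ‖wstar + t • G - x‖]
  -- expand the squared norm
  have hexp : ‖h - η • G‖ ^ 2 = ‖h‖ ^ 2 - 2 * (η * a) + η ^ 2 * c := by
    rw [@norm_sub_sq_real, real_inner_smul_right, norm_smul, mul_pow, hc]
    rw [real_inner_comm, ← ha, Real.norm_eq_abs, sq_abs]
  have hsq : ‖h - η • G‖ ^ 2 ≤ ((1 - η * μ / 2) * ‖h‖) ^ 2 := by
    rw [hexp]
    have hηt : η ≤ t := hηL
    nlinarith [mul_le_mul_of_nonneg_left ha1 hη.le, mul_le_mul_of_nonneg_left ha2 hη.le,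
      mul_nonneg (mul_nonneg hη.le (sub_nonneg.2 hηt)) hcnn,
      mul_nonneg (mul_nonneg (mul_nonneg hη.le hη.le) (mul_nonneg hμ.le hμ.le)) (sq_nonneg ‖h‖)]
  have hgoal : x - η • G - wstar = h - η • G := by rw [hh]; abel
  rw [hgoal]
  nlinarith [norm_nonneg (h - η • G), mul_nonneg hρ (norm_nonneg h), hsq]

end Aux3

/-- Convergence of projected gradient descent with an inexact gradient oracle, for a
strongly convex and smooth objective. -/
theorem stmt_3 (d : ℕ) (F : EuclideanSpace ℝ (Fin d) → ℝ)
    (μ L η Δ : ℝ) (hμ : 0 < μ) (hL : 0 < L) (hη : 0 < η) (hηL : η ≤ 1 / L)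
    (hΔ : 0 ≤ Δ)
    (W : Set (EuclideanSpace ℝ (Fin d))) (hW : Convex ℝ W) (hWclosed : IsClosed W)
    (wstar : EuclideanSpace ℝ (Fin d)) (hws : wstar ∈ W)
    (hdiff : Differentiable ℝ F)
    (hstrong : ∀ x y, F x + inner ℝ (gradient F x) (y - x) + μ / 2 * ‖y - x‖ ^ 2 ≤ F y)
    (hsmooth : ∀ x y, ‖gradient F x - gradient F y‖ ≤ L * ‖x - y‖)
    (hgradstar : gradient F wstar = 0)
    (g : EuclideanSpace ℝ (Fin d) → EuclideanSpace ℝ (Fin d))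
    (hg : ∀ w ∈ W, ‖g w - gradient F w‖ ≤ Δ)
    (proj : EuclideanSpace ℝ (Fin d) → EuclideanSpace ℝ (Fin d))
    (hproj : ∀ y, proj y ∈ W ∧ ∀ z ∈ W, ‖y - proj y‖ ≤ ‖y - z‖)
    (w : ℕ → EuclideanSpace ℝ (Fin d)) (hw0 : w 0 ∈ W)
    (hupdate : ∀ t, w (t + 1) = proj (w t - η • g (w t))) :
    ∀ t, ‖w t - wstar‖ ≤ (1 - η * μ / 2) ^ t * ‖w 0 - wstar‖ + 2 * Δ / μ := by
  rcases subsingleton_or_nontrivial (EuclideanSpace ℝ (Fin d)) with hsub | hnt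
  · intro t
    have h1 : w t - wstar = 0 := Subsingleton.elim _ _
    have h2 : w 0 - wstar = 0 := Subsingleton.elim _ _
    rw [h1, h2]
    simp only [norm_zero, mul_zero, zero_add]
    positivity
  · -- μ ≤ L, hence 0 ≤ 1 - η * μ / 2
    have hμL : μ ≤ L := by
      obtain ⟨x₀, y₀, hxy⟩ := exists_pair_ne (EuclideanSpace ℝ (Fin d))
      have hn : 0 < ‖x₀ - y₀‖ := by
        rw [norm_pos_iff]; exact sub_ne_zero.2 hxy
      have s1 := hstrong x₀ y₀
      have s2 := hstrong y₀ x₀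
      have e1 : ‖y₀ - x₀‖ = ‖x₀ - y₀‖ := norm_sub_rev _ _
      rw [e1] at s1
      have hsum : μ * ‖x₀ - y₀‖ ^ 2 ≤
          ⟪gradient F x₀ - gradient F y₀, x₀ - y₀⟫ := by
        have e2 : ⟪gradient F x₀ - gradient F y₀, x₀ - y₀⟫
            = -(⟪gradient F x₀, y₀ - x₀⟫ + ⟪gradient F y₀, x₀ - y₀⟫) := by
          rw [inner_sub_left]
          rw [show y₀ - x₀ = -(x₀ - y₀) by abel, inner_neg_right]
          ring
        rw [e2]
        have := s1; have := s2
        nlinarith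
      have hcs : ⟪gradient F x₀ - gradient F y₀, x₀ - y₀⟫
          ≤ L * ‖x₀ - y₀‖ ^ 2 := by
        calc ⟪gradient F x₀ - gradient F y₀, x₀ - y₀⟫
            ≤ ‖gradient F x₀ - gradient F y₀‖ * ‖x₀ - y₀‖ := real_inner_le_norm _ _
          _ ≤ L * ‖x₀ - y₀‖ * ‖x₀ - y₀‖ :=
              mul_le_mul_of_nonneg_right (hsmooth x₀ y₀) (norm_nonneg _)
          _ = L * ‖x₀ - y₀‖ ^ 2 := by ring
      nlinarith [pow_pos hn 2, hsum, hcs]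
    have hημ : η * μ ≤ 1 := by
      calc η * μ ≤ (1 / L) * μ := mul_le_mul_of_nonneg_right hηL hμ.le
        _ ≤ 1 := by rw [div_mul_eq_mul_div, one_mul, div_le_one hL]; exact hμL
    have hρ : 0 ≤ 1 - η * μ / 2 := by linarith
    set ρ : ℝ := 1 - η * μ / 2 with hρdef
    set B : ℝ := ‖w 0 - wstar‖ with hB
    have key : ∀ t, w t ∈ W ∧ ‖w t - wstar‖ ≤ ρ ^ t * B + 2 * Δ / μ := by
      intro t
      induction t with
      | zero =>
        refine ⟨hw0, ?_⟩
        have : (0:ℝ) ≤ 2 * Δ / μ := by positivity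
        simp only [pow_zero, one_mul]
        linarith
      | succ t ih =>
        obtain ⟨ihmem, ihbound⟩ := ih
        constructor
        · rw [hupdate t]; exact (hproj _).1
        · have step1 : ‖w (t+1) - wstar‖ ≤ ‖w t - η • g (w t) - wstar‖ := by
            rw [hupdate t]
            exact proj_nonexpansive W hW proj hproj wstar hws _
          have step2 : ‖w t - η • g (w t) - wstar‖
              ≤ ‖w t - η • gradient F (w t) - wstar‖ + η * Δ := by
            have hdec : w t - η • g (w t) - wstar
                = (w t - η • gradient F (w t) - wstar) - η • (g (w t) - gradient F (w t)) := by
              rw [smul_sub]; abel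
            rw [hdec]
            refine le_trans (norm_sub_le _ _) ?_
            have : ‖η • (g (w t) - gradient F (w t))‖ ≤ η * Δ := by
              rw [norm_smul, Real.norm_eq_abs, abs_of_nonneg hη.le]
              exact mul_le_mul_of_nonneg_left (hg (w t) ihmem) hη.le
            linarith
          have step3 : ‖w t - η • gradient F (w t) - wstar‖ ≤ ρ * ‖w t - wstar‖ :=
            contraction F μ L η hμ hL hη hηL hρ wstar hdiff hstrong hsmooth hgradstar (w t)
          have step4 : ρ * ‖w t - wstar‖ ≤ ρ * (ρ ^ t * B + 2 * Δ / μ) :=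
            mul_le_mul_of_nonneg_left ihbound hρ
          have step5 : ρ * (ρ ^ t * B + 2 * Δ / μ) + η * Δ = ρ ^ (t+1) * B + 2 * Δ / μ := by
            rw [hρdef]
            field_simp
            ring
          calc ‖w (t+1) - wstar‖ ≤ ‖w t - η • g (w t) - wstar‖ := step1
            _ ≤ ‖w t - η • gradient F (w t) - wstar‖ + η * Δ := step2
            _ ≤ ρ * ‖w t - wstar‖ + η * Δ := by linarith
            _ ≤ ρ * (ρ ^ t * B + 2 * Δ / μ) + η * Δ := by linarith
            _ = ρ ^ (t+1) * B + 2 * Δ / μ := step5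
    exact fun t => (key t).2
end

section
/- Let h : ℝ^d → ℝ be twice differentiable on a ball B(a, r) with ∇²h(s) ⪰ c·I for all s ∈ B(a, r), with c > 0. Let g be a point where ∇h(g) = 0. Then min{‖g - a‖, r} ≤ ‖∇h(a)‖ / c. -/
open Set Metric

variable {d : ℕ}

/-- First-order condition for a convex differentiable function. -/
lemma first_order_aux (h : EuclideanSpace ℝ (Fin d) → ℝ)
    (hconv : ConvexOn ℝ Set.univ h) (hdiff : Differentiable ℝ h)
    (x y : EuclideanSpace ℝ (Fin d)) :
    (inner ℝ (gradient h x) (y - x) : ℝ) ≤ h y - h x := by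
  rcases eq_or_ne y x with rfl | hne
  · simp
  set φ : ℝ → ℝ := fun t => h (t • (y - x) + x) with hφ
  have hφconv : ConvexOn ℝ Set.univ φ := by
    have := hconv.comp_affineMap (AffineMap.lineMap x y)
    have heq : (h ∘ (AffineMap.lineMap x y : ℝ →ᵃ[ℝ] _)) = φ := by
      funext t
      simp [φ, AffineMap.lineMap_apply, vsub_eq_sub, vadd_eq_add]
    rw [heq] at this
    simpa using this
  have hline : ∀ t : ℝ, HasDerivAt (fun t : ℝ => t • (y - x) + x) (y - x) t := by
    intro t
    simpa using ((hasDerivAt_id t).smul_const (y - x)).add_const x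
  have hderiv : HasDerivAt φ (inner ℝ (gradient h x) (y - x) : ℝ) 0 := by
    have hp : ((0:ℝ) • (y - x) + x) = x := by simp
    have hgrad : HasFDerivAt h ((InnerProductSpace.toDual ℝ _ (gradient h x)) :
        EuclideanSpace ℝ (Fin d) →L[ℝ] ℝ) x :=
      hasGradientAt_iff_hasFDerivAt.mp (hdiff x).hasGradientAt
    have hgrad' : HasFDerivAt h ((InnerProductSpace.toDual ℝ _ (gradient h x)) :
        EuclideanSpace ℝ (Fin d) →L[ℝ] ℝ) ((0:ℝ) • (y - x) + x) := by
      rw [hp]; exact hgrad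
    have := hgrad'.comp_hasDerivAt 0 (hline 0)
    simp only [InnerProductSpace.toDual_apply_apply] at this
    exact this
  have := hφconv.le_slope_of_hasDerivAt (x := (0:ℝ)) (y := (1:ℝ))
    (mem_univ _) (mem_univ _) one_pos hderiv
  rw [slope_def_field] at this
  simpa [φ] using this

/-- If `h` has Hessian bounded below by `c·I` on a ball around `a`, and `g` is a stationary
point of `h`, then `min{‖g - a‖, r} ≤ ‖∇h(a)‖ / c`. -/
theorem stmt_11 (d : ℕ) (h : EuclideanSpace ℝ (Fin d) → ℝ)
    (hconv : ConvexOn ℝ Set.univ h)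
    (hdiff : Differentiable ℝ h)
    (a : EuclideanSpace ℝ (Fin d)) (r c : ℝ) (hr : 0 < r) (hc : 0 < c)
    (H : EuclideanSpace ℝ (Fin d) →
      EuclideanSpace ℝ (Fin d) →L[ℝ] EuclideanSpace ℝ (Fin d))
    (hH : ∀ s ∈ Metric.closedBall a r, HasFDerivAt (gradient h) (H s) s)
    (hHlb : ∀ s ∈ Metric.closedBall a r, ∀ v : EuclideanSpace ℝ (Fin d),
      c * ‖v‖ ^ 2 ≤ inner ℝ v (H s v))
    (g : EuclideanSpace ℝ (Fin d)) (hg : gradient h g = 0) :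
    min ‖g - a‖ r ≤ ‖gradient h a‖ / c := by
  rcases eq_or_ne g a with rfl | hga
  · have : min ‖g - g‖ r = 0 := by simp [hr.le]
    rw [this]
    positivity
  set n : ℝ := ‖g - a‖ with hn
  have hn0 : 0 < n := by
    rw [hn]; exact norm_pos_iff.mpr (sub_ne_zero.mpr hga)
  set t : ℝ := min n r with ht
  have ht0 : 0 < t := lt_min hn0 hr
  have htn : t ≤ n := min_le_left _ _
  have htr : t ≤ r := min_le_right _ _
  set b : EuclideanSpace ℝ (Fin d) := (t / n) • (g - a) + a with hb
  have hba : b - a = (t / n) • (g - a) := by simp [hb]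
  have hbanorm : ‖b - a‖ = t := by
    rw [hba, norm_smul]
    simp only [Real.norm_eq_abs, abs_of_nonneg (div_nonneg ht0.le hn0.le)]
    field_simp
    exact hn.symm
  have hbmem : b ∈ Metric.closedBall a r := by
    rw [Metric.mem_closedBall, dist_eq_norm, hbanorm]; exact htr
  have hamem : a ∈ Metric.closedBall a r := Metric.mem_closedBall_self hr.le
  -- strong monotonicity along segment from a to b
  have key : c * t ^ 2 ≤ (inner ℝ (gradient h b - gradient h a) (b - a) : ℝ) := by
    set v : EuclideanSpace ℝ (Fin d) := b - a with hv
    set p : ℝ → EuclideanSpace ℝ (Fin d) := fun s => s • v + a with hp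
    have hpmem : ∀ s ∈ Icc (0:ℝ) 1, p s ∈ Metric.closedBall a r := by
      intro s hs
      have := (convex_closedBall a r).add_smul_sub_mem hamem hbmem hs
      simpa [hp, hv, add_comm] using this
    set f : ℝ → ℝ := fun s => (inner ℝ (gradient h (p s)) v : ℝ) with hf
    have hfderiv : ∀ s ∈ Icc (0:ℝ) 1,
        HasDerivAt f (inner ℝ ((H (p s)) v) v : ℝ) s := by
      intro s hs
      have hline : HasDerivAt p v s := by
        have := ((hasDerivAt_id s).smul_const v).add_const a
        simp only [one_smul] at this
        exact this
      have hcomp : HasDerivAt (fun s => gradient h (p s)) ((H (p s)) v) s :=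
        (hH (p s) (hpmem s hs)).comp_hasDerivAt s hline
      have := hcomp.inner ℝ (hasDerivAt_const s v)
      simp only [inner_zero_right, inner_zero_left, add_zero, zero_add] at this
      exact this
    have hmvt := (convex_Icc (0:ℝ) 1).mul_sub_le_image_sub_of_le_deriv
      (f := f) (C := c * ‖v‖ ^ 2)
      (fun s hs => (hfderiv s hs).continuousAt.continuousWithinAt)
      (fun s hs => ((hfderiv s (interior_subset hs)).differentiableAt).differentiableWithinAt)
      (fun s hs => by
        rw [(hfderiv s (interior_subset hs)).deriv]
        calc c * ‖v‖ ^ 2 ≤ (inner ℝ v ((H (p s)) v) : ℝ) :=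
              hHlb (p s) (hpmem s (interior_subset hs)) v
          _ = (inner ℝ ((H (p s)) v) v : ℝ) := real_inner_comm _ _)
      0 (by norm_num) 1 (by norm_num) (by norm_num)
    have hp1 : p 1 = b := by simp [hp, hv]
    have hp0 : p 0 = a := by simp [hp]
    norm_num at hmvt
    simp only [hf, hp1, hp0] at hmvt
    rw [inner_sub_left]
    calc c * t ^ 2 = c * ‖v‖ ^ 2 := by rw [hv, hbanorm]
      _ ≤ _ := hmvt
  -- ⟪∇h b, b - a⟫ ≤ 0
  have hinner_nonpos : (inner ℝ (gradient h b) (b - a) : ℝ) ≤ 0 := by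
    rcases eq_or_lt_of_le htn with heq | hlt
    · have hbg : b = g := by
        rw [hb, heq, div_self hn0.ne', one_smul, sub_add_cancel]
      rw [hbg, hg]
      simp
    · have h1 := first_order_aux h hconv hdiff b g
      have h2 := first_order_aux h hconv hdiff g b
      rw [hg] at h2
      simp only [inner_zero_left] at h2
      have hgb : (inner ℝ (gradient h b) (g - b) : ℝ) ≤ 0 := by linarith
      have hgbeq : g - b = (1 - t / n) • (g - a) := by
        rw [hb]
        rw [sub_smul, one_smul]
        abel
      rw [hgbeq, real_inner_smul_right] at hgb
      have hs1 : t / n < 1 := (div_lt_one hn0).mpr hlt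
      have hI : (inner ℝ (gradient h b) (g - a) : ℝ) ≤ 0 := by
        nlinarith [hgb, sub_pos.mpr hs1]
      rw [hba, real_inner_smul_right]
      exact mul_nonpos_of_nonneg_of_nonpos (div_nonneg ht0.le hn0.le) hI
  -- combine
  have hcs : -(inner ℝ (gradient h a) (b - a) : ℝ) ≤ ‖gradient h a‖ * t := by
    have : (inner ℝ (gradient h a) (a - b) : ℝ) ≤ ‖gradient h a‖ * ‖a - b‖ :=
      real_inner_le_norm _ _
    rw [norm_sub_rev, hbanorm] at this
    rw [← inner_neg_right]
    simpa [neg_sub] using this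
  have hct : c * t ≤ ‖gradient h a‖ := by
    have h3 : c * t ^ 2 ≤ ‖gradient h a‖ * t := by
      rw [inner_sub_left] at key
      linarith
    nlinarith
  rw [le_div_iff₀ hc]
  calc t * c = c * t := mul_comm _ _
    _ ≤ _ := hct
end
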